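/- arXiv:0910.5490 — 5 statements merged into one kernel-verified Lean document; each statement's English description precedes it below -/
import Mathlib

section
/- Let 0 ≤ δ < 1/4 and let (H₁, H₂, H₃) be a δ-representation of the sphere by n×n complex matrices. Set S = S(H₁,H₂,H₃), the 2n×2n Hermitian block matrix [[H₃, H₁ − iH₂], [H₁ + iH₂, −H₃]]. Then ‖S² − I‖ ≤ 4δ, and every eigenvalue λ of S satisfies 1 − 4δ ≤ λ² ≤ 1 + 4δ; in particular the spectrum of S is contained in [−√(1+4δ), −√(1−4δ)] ∪ [√(1−4δ), √(1+4δ)], so S is invertible. -/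
open Matrix

noncomputable section

namespace AC

variable {m : Type*} [Fintype m] [DecidableEq m]

/-- The ℓ² operator norm of a complex matrix. -/
def opNorm (A : Matrix m m ℂ) : ℝ :=
  ‖Matrix.toEuclideanCLM (𝕜 := ℂ) A‖

/-- `(H₁, H₂, H₃)` is a δ-representation of the sphere: each `Hᵣ` is Hermitian, all
commutators have ℓ²-operator norm at most `δ`, and `‖H₁² + H₂² + H₃² − I‖ ≤ δ`. -/
def IsSphereRep (δ : ℝ) (H₁ H₂ H₃ : Matrix m m ℂ) : Prop :=
  H₁.IsHermitian ∧ H₂.IsHermitian ∧ H₃.IsHermitian ∧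
  opNorm (H₁ * H₂ - H₂ * H₁) ≤ δ ∧
  opNorm (H₁ * H₃ - H₃ * H₁) ≤ δ ∧
  opNorm (H₂ * H₃ - H₃ * H₂) ≤ δ ∧
  opNorm (H₁ ^ 2 + H₂ ^ 2 + H₃ ^ 2 - 1) ≤ δ

/-- The 2n×2n Hermitian block matrix `S(H₁,H₂,H₃) = [[H₃, H₁ − iH₂], [H₁ + iH₂, −H₃]]`. -/
def sphS (H₁ H₂ H₃ : Matrix m m ℂ) : Matrix (m ⊕ m) (m ⊕ m) ℂ :=
  Matrix.fromBlocks H₃ (H₁ - Complex.I • H₂) (H₁ + Complex.I • H₂) (-H₃)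

open Classical in
/-- The Bott index: the number of positive eigenvalues (with multiplicity) of
`S(H₁,H₂,H₃)` minus `n`.  (Junk value `0` if `S(H₁,H₂,H₃)` is not Hermitian.) -/
def bott (H₁ H₂ H₃ : Matrix m m ℂ) : ℤ :=
  if h : (sphS H₁ H₂ H₃).IsHermitian then
    ((Finset.univ.filter fun i => 0 < h.eigenvalues i).card : ℤ) - Fintype.card m
  else 0

end AC

/-!
The blocks of `S² − I` are `H₁² + H₂² + H₃² − I ± i[H₁, H₂]` on the diagonal and
`∓[H₁, H₃] + i[H₂, H₃]` off it. The operator norm of a 2×2 block matrix is at most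
`max ‖A‖ ‖D‖ + max ‖B‖ ‖C‖`, so `‖S² − I‖ ≤ 2δ + 2δ`. An eigenvector of `S` for `λ` is one of
`S² − I` for `λ² − 1`, whence `|λ² − 1| ≤ 4δ`. Finally `‖S² − I‖ < 1`, so `S²`, and with it `S`,
is invertible by the Neumann series.
-/

open scoped Matrix.Norms.L2Operator

namespace Matrix

section Blocks

variable {𝕜 : Type*} [RCLike 𝕜] {m n p q : Type*} [Fintype m] [Fintype n] [Fintype p] [Fintype q]
  [DecidableEq p] [DecidableEq q]

lemma l2_opNorm_fromBlocks_zero₁₂_zero₂₁_le (A : Matrix m p 𝕜) (D : Matrix n q 𝕜) :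
    ‖fromBlocks A 0 0 D‖ ≤ max ‖A‖ ‖D‖ := by
  set K := max ‖A‖ ‖D‖
  rw [l2_opNorm_def]
  refine ContinuousLinearMap.opNorm_le_bound _ (le_max_of_le_left (norm_nonneg A)) fun x => ?_
  set x₁ : EuclideanSpace 𝕜 p := WithLp.toLp 2 (x.ofLp ∘ Sum.inl)
  set x₂ : EuclideanSpace 𝕜 q := WithLp.toLp 2 (x.ofLp ∘ Sum.inr)
  have hx : ‖x‖ ^ 2 = ‖x₁‖ ^ 2 + ‖x₂‖ ^ 2 := by
    simp [EuclideanSpace.norm_sq_eq, Fintype.sum_sum_type, x₁, x₂]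
  refine (sq_le_sq₀ (norm_nonneg _) (by positivity)).mp ?_
  calc _ = ‖(EuclideanSpace.equiv m 𝕜).symm (A *ᵥ x₁)‖ ^ 2 +
        ‖(EuclideanSpace.equiv n 𝕜).symm (D *ᵥ x₂)‖ ^ 2 := by
        simp [EuclideanSpace.norm_sq_eq, Fintype.sum_sum_type, fromBlocks_mulVec, x₁, x₂]
    _ ≤ (K * ‖x₁‖) ^ 2 + (K * ‖x₂‖) ^ 2 := by
        gcongr
        · exact (l2_opNorm_mulVec A x₁).trans (by gcongr; exact le_max_left _ _)
        · exact (l2_opNorm_mulVec D x₂).trans (by gcongr; exact le_max_right _ _)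
    _ = (K * ‖x‖) ^ 2 := by rw [mul_pow, mul_pow, mul_pow, hx]; ring

-- By the C⋆-identity, since `Mᴴ * M` is block diagonal.
lemma l2_opNorm_fromBlocks_zero₁₁_zero₂₂_le (B : Matrix m q 𝕜) (C : Matrix n p 𝕜) :
    ‖fromBlocks 0 B C 0‖ ≤ max ‖B‖ ‖C‖ := by
  have hM : (fromBlocks 0 B C 0)ᴴ * fromBlocks 0 B C 0 = fromBlocks (Cᴴ * C) 0 0 (Bᴴ * B) := by
    simp [fromBlocks_conjTranspose, fromBlocks_multiply]
  have hsq : ‖fromBlocks 0 B C 0‖ * ‖fromBlocks 0 B C 0‖ ≤ max ‖B‖ ‖C‖ * max ‖B‖ ‖C‖ := by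
    rw [← l2_opNorm_conjTranspose_mul_self, hM]
    refine (l2_opNorm_fromBlocks_zero₁₂_zero₂₁_le _ _).trans ?_
    rw [l2_opNorm_conjTranspose_mul_self, l2_opNorm_conjTranspose_mul_self]
    exact max_le (mul_self_le_mul_self (norm_nonneg _) (le_max_right _ _))
      (mul_self_le_mul_self (norm_nonneg _) (le_max_left _ _))
  exact mul_self_le_mul_self_iff (norm_nonneg _) (le_max_of_le_left (norm_nonneg _)) |>.mpr hsq

lemma l2_opNorm_fromBlocks_le (A : Matrix m p 𝕜) (B : Matrix m q 𝕜) (C : Matrix n p 𝕜)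
    (D : Matrix n q 𝕜) : ‖fromBlocks A B C D‖ ≤ max ‖A‖ ‖D‖ + max ‖B‖ ‖C‖ := by
  have hsplit : fromBlocks A B C D = fromBlocks A 0 0 D + fromBlocks 0 B C 0 := by
    simp [fromBlocks_add]
  rw [hsplit]
  exact (norm_add_le _ _).trans (add_le_add (l2_opNorm_fromBlocks_zero₁₂_zero₂₁_le A D)
    (l2_opNorm_fromBlocks_zero₁₁_zero₂₂_le B C))

end Blocks

variable {𝕜 : Type*} [RCLike 𝕜] {n : Type*} [Fintype n] [DecidableEq n]

lemma norm_le_l2_opNorm_of_mulVec_eq_smul {A : Matrix n n 𝕜} {v : EuclideanSpace 𝕜 n}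
    {μ : 𝕜} (hv : v ≠ 0) (h : A *ᵥ v = μ • v) : ‖μ‖ ≤ ‖A‖ := by
  have hAv := l2_opNorm_mulVec A v
  rw [h] at hAv
  change ‖μ • v‖ ≤ ‖A‖ * ‖v‖ at hAv
  rw [norm_smul] at hAv
  exact le_of_mul_le_mul_right hAv (norm_pos_iff.mpr hv)

lemma IsHermitian.abs_eigenvalues_sq_sub_one_le {A : Matrix n n 𝕜} (hA : A.IsHermitian)
    (i : n) : |hA.eigenvalues i ^ 2 - 1| ≤ ‖A * A - 1‖ := by
  have hv : (A * A - 1) *ᵥ ⇑(hA.eigenvectorBasis i) =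
      ((hA.eigenvalues i ^ 2 - 1 : ℝ) : 𝕜) • ⇑(hA.eigenvectorBasis i) := by
    rw [sub_mulVec, ← mulVec_mulVec, hA.mulVec_eigenvectorBasis, mulVec_smul,
      hA.mulVec_eigenvectorBasis, one_mulVec, smul_smul, ← RCLike.real_smul_eq_coe_smul (K := 𝕜)]
    module
  have h := norm_le_l2_opNorm_of_mulVec_eq_smul (hA.eigenvectorBasis.orthonormal.ne_zero i) hv
  rwa [RCLike.norm_ofReal] at h

end Matrix

lemma isUnit_of_norm_mul_self_sub_one_lt_one {R : Type*} [NormedRing R] [HasSummableGeomSeries R]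
    {a : R} (h : ‖a * a - 1‖ < 1) : IsUnit a := by
  have haa : IsUnit (a * a) := by
    simpa using isUnit_one_sub_of_norm_lt_one (x := 1 - a * a) (by rwa [norm_sub_rev])
  exact ((Commute.refl a).isUnit_mul_iff.mp haa).1

lemma Real.mem_Icc_neg_sqrt_or_mem_Icc_sqrt {a b x : ℝ} (ha : a ≤ x ^ 2) (hb : x ^ 2 ≤ b) :
    x ∈ Set.Icc (-√b) (-√a) ∨ x ∈ Set.Icc (√a) (√b) := by
  have hlo : √a ≤ |x| := Real.sqrt_sq_eq_abs x ▸ Real.sqrt_le_sqrt ha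
  have hhi : |x| ≤ √b := Real.sqrt_sq_eq_abs x ▸ Real.sqrt_le_sqrt hb
  rcases le_or_gt 0 x with hx | hx
  · rw [abs_of_nonneg hx] at hlo hhi
    exact Or.inr ⟨hlo, hhi⟩
  · rw [abs_of_neg hx] at hlo hhi
    exact Or.inl ⟨by linarith, by linarith⟩

namespace AC

variable {m : Type*} [Fintype m] [DecidableEq m]

lemma opNorm_eq_l2_opNorm (A : Matrix m m ℂ) : opNorm A = ‖A‖ := rfl

lemma sphS_mul_self_sub_one (H₁ H₂ H₃ : Matrix m m ℂ) :
    sphS H₁ H₂ H₃ * sphS H₁ H₂ H₃ - 1 =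
      fromBlocks
        ((H₁ ^ 2 + H₂ ^ 2 + H₃ ^ 2 - 1) + Complex.I • (H₁ * H₂ - H₂ * H₁))
        (Complex.I • (H₂ * H₃ - H₃ * H₂) - (H₁ * H₃ - H₃ * H₁))
        ((H₁ * H₃ - H₃ * H₁) + Complex.I • (H₂ * H₃ - H₃ * H₂))
        ((H₁ ^ 2 + H₂ ^ 2 + H₃ ^ 2 - 1) - Complex.I • (H₁ * H₂ - H₂ * H₁)) := by
  rw [sphS, fromBlocks_multiply, ← fromBlocks_one, sub_eq_add_neg, fromBlocks_neg, fromBlocks_add]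
  congr 1 <;>
    simp only [mul_add, add_mul, sub_mul, mul_sub, Matrix.smul_mul, Matrix.mul_smul, smul_smul,
      Complex.I_mul_I, pow_two, mul_neg, neg_mul] <;>
    module

lemma norm_sphS_mul_self_sub_one_le {δ : ℝ} {H₁ H₂ H₃ : Matrix m m ℂ}
    (hrep : IsSphereRep δ H₁ H₂ H₃) : ‖sphS H₁ H₂ H₃ * sphS H₁ H₂ H₃ - 1‖ ≤ 4 * δ := by
  obtain ⟨-, -, -, h₁₂, h₁₃, h₂₃, hsum⟩ := hrep
  rw [opNorm_eq_l2_opNorm] at h₁₂ h₁₃ h₂₃ hsum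
  have hI (M : Matrix m m ℂ) : ‖Complex.I • M‖ = ‖M‖ := by simp [norm_smul]
  rw [sphS_mul_self_sub_one]
  refine (l2_opNorm_fromBlocks_le _ _ _ _).trans ?_
  have hdiag := max_le (norm_add_le_of_le hsum ((hI _).trans_le h₁₂))
    (norm_sub_le_of_le hsum ((hI _).trans_le h₁₂))
  have hoff := max_le (norm_sub_le_of_le ((hI _).trans_le h₂₃) h₁₃)
    (norm_add_le_of_le h₁₃ ((hI _).trans_le h₂₃))
  linarith

end AC

theorem sphS_sq_close_to_one_general {n : ℕ} (δ : ℝ) (hδ : δ < 1/4)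
    (H₁ H₂ H₃ : Matrix (Fin n) (Fin n) ℂ)
    (hrep : AC.IsSphereRep δ H₁ H₂ H₃) :
    AC.opNorm (AC.sphS H₁ H₂ H₃ * AC.sphS H₁ H₂ H₃ - 1) ≤ 4 * δ ∧
    (∀ (hS : (AC.sphS H₁ H₂ H₃).IsHermitian) (i : Fin n ⊕ Fin n),
      1 - 4 * δ ≤ hS.eigenvalues i ^ 2 ∧ hS.eigenvalues i ^ 2 ≤ 1 + 4 * δ ∧
      (hS.eigenvalues i ∈ Set.Icc (-Real.sqrt (1 + 4*δ)) (-Real.sqrt (1 - 4*δ)) ∨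
       hS.eigenvalues i ∈ Set.Icc (Real.sqrt (1 - 4*δ)) (Real.sqrt (1 + 4*δ)))) ∧
    IsUnit (AC.sphS H₁ H₂ H₃) := by
  have hnorm := AC.norm_sphS_mul_self_sub_one_le hrep
  refine ⟨hnorm, fun hS i => ?_, isUnit_of_norm_mul_self_sub_one_lt_one (by linarith)⟩
  obtain ⟨hlo, hhi⟩ := abs_le.mp ((hS.abs_eigenvalues_sq_sub_one_le i).trans hnorm)
  have hlo' : 1 - 4 * δ ≤ hS.eigenvalues i ^ 2 := by linarith
  have hhi' : hS.eigenvalues i ^ 2 ≤ 1 + 4 * δ := by linarith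
  exact ⟨hlo', hhi', Real.mem_Icc_neg_sqrt_or_mem_Icc_sqrt hlo' hhi'⟩

/-- Lemma (`lem:boundPsquareMinusP`): if `(H₁,H₂,H₃)` is a δ-representation of the sphere
with `0 ≤ δ < 1/4` and `S = S(H₁,H₂,H₃)`, then `‖S² − I‖ ≤ 4δ`, every eigenvalue `λ` of
`S` satisfies `1 − 4δ ≤ λ² ≤ 1 + 4δ` (i.e. the spectrum of `S` lies in
`[−√(1+4δ), −√(1−4δ)] ∪ [√(1−4δ), √(1+4δ)]`), and `S` is invertible. -/
theorem sphS_sq_close_to_one {n : ℕ} (δ : ℝ) (hδ0 : 0 ≤ δ) (hδ : δ < 1/4)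
    (H₁ H₂ H₃ : Matrix (Fin n) (Fin n) ℂ)
    (hrep : AC.IsSphereRep δ H₁ H₂ H₃) :
    AC.opNorm (AC.sphS H₁ H₂ H₃ * AC.sphS H₁ H₂ H₃ - 1) ≤ 4 * δ ∧
    (∀ (hS : (AC.sphS H₁ H₂ H₃).IsHermitian) (i : Fin n ⊕ Fin n),
      1 - 4 * δ ≤ hS.eigenvalues i ^ 2 ∧ hS.eigenvalues i ^ 2 ≤ 1 + 4 * δ ∧
      (hS.eigenvalues i ∈ Set.Icc (-Real.sqrt (1 + 4*δ)) (-Real.sqrt (1 - 4*δ)) ∨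
       hS.eigenvalues i ∈ Set.Icc (Real.sqrt (1 - 4*δ)) (Real.sqrt (1 + 4*δ)))) ∧
    IsUnit (AC.sphS H₁ H₂ H₃) :=
  sphS_sq_close_to_one_general δ hδ H₁ H₂ H₃ hrep
end
end

section
/- Let 0 ≤ δ < 1/4 and let (H₁, H₂, H₃) be a δ-representation of the sphere by n×n complex matrices. If every entry of each matrix H₁, H₂, H₃ is a real number, then bott(H₁, H₂, H₃) = 0. -/
open Matrix

noncomputable section

/-!
For real Hermitian `H_r` (hence symmetric), the transpose of `S = S(H₁,H₂,H₃)` is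
`S(H₁,-H₂,H₃)`, and the block rotation `J = [[0,1],[-1,0]]` conjugates this to `-S`. So `S` and
`-S` have the same characteristic polynomial, and the spectrum of the Hermitian matrix `S` is
symmetric about `0`. On the other hand `S² = 1 + E` with every `n×n` block of `E` of norm at most
`2δ < 1/2`, so `S` is invertible; hence exactly half of its `2n` eigenvalues are positive.
-/

open Polynomial in
lemma Matrix.IsHermitian.map_neg_eigenvalues_eq {𝕜 n : Type*} [RCLike 𝕜] [Fintype n]
    [DecidableEq n] {A : Matrix n n 𝕜} (hA : A.IsHermitian) (h : (-A).charpoly = A.charpoly) :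
    (Finset.univ.val.map hA.eigenvalues).map Neg.neg = Finset.univ.val.map hA.eigenvalues := by
  apply Multiset.map_injective (f := ((↑) : ℝ → 𝕜)) RCLike.ofReal_injective
  have hroots := congrArg roots h
  rw [← cfc_neg_id (R := ℝ) A hA.isSelfAdjoint, hA.charpoly_cfc_eq,
    roots_prod _ _ (Finset.prod_ne_zero_iff.mpr fun i _ => X_sub_C_ne_zero _),
    hA.roots_charpoly_eq_eigenvalues] at hroots
  simpa [Multiset.map_map] using hroots

lemma Multiset.two_mul_countP_pos_eq_card {N : Multiset ℝ} (hsymm : N.map Neg.neg = N)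
    (h0 : (0 : ℝ) ∉ N) : 2 * N.countP (0 < ·) = Multiset.card N := by
  have hneg : N.countP (· < 0) = N.countP (0 < ·) := by
    conv_rhs => rw [← hsymm]
    rw [Multiset.countP_map, Multiset.countP_eq_card_filter]
    simp only [neg_pos]
  have hsplit : N.countP (fun a => ¬ 0 < a) = N.countP (· < 0) :=
    Multiset.countP_congr rfl fun a ha => by
      rw [not_lt, (ne_of_mem_of_not_mem ha h0).le_iff_lt]
  have := Multiset.card_eq_countP_add_countP (0 < ·) N
  omega

lemma Matrix.IsHermitian.two_mul_card_pos_eigenvalues {𝕜 n : Type*} [RCLike 𝕜] [Fintype n]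
    [DecidableEq n] {A : Matrix n n 𝕜} (hA : A.IsHermitian) (hneg : (-A).charpoly = A.charpoly)
    (hdet : A.det ≠ 0) :
    2 * (Finset.univ.filter fun i => 0 < hA.eigenvalues i).card = Fintype.card n := by
  have h0 : (0 : ℝ) ∉ Finset.univ.val.map hA.eigenvalues := by
    intro h
    obtain ⟨i, -, hi⟩ := Multiset.mem_map.mp h
    rw [hA.det_eq_prod_eigenvalues] at hdet
    exact hdet (Finset.prod_eq_zero (Finset.mem_univ i) (by simp [hi]))
  have := Multiset.two_mul_countP_pos_eq_card (hA.map_neg_eigenvalues_eq hneg) h0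
  rwa [Multiset.card_map, Multiset.countP_map, ← Finset.filter_val] at this

lemma Matrix.IsHermitian.transpose_eq_self_of_im_eq_zero {n : Type*} {H : Matrix n n ℂ}
    (hH : H.IsHermitian) (hre : ∀ i j, (H i j).im = 0) : Hᵀ = H := by
  ext i j
  rw [transpose_apply, ← hH.apply i j]
  exact (Complex.conj_eq_iff_im.mpr (hre j i)).symm

namespace AC
variable {m : Type*} [Fintype m] [DecidableEq m]

lemma opNorm_neg (A : Matrix m m ℂ) : opNorm (-A) = opNorm A := by
  rw [opNorm, map_neg, norm_neg, opNorm]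

lemma opNorm_add_I_smul_le (A B : Matrix m m ℂ) :
    opNorm (A + Complex.I • B) ≤ opNorm A + opNorm B := by
  simpa [opNorm, norm_smul] using norm_add_le (toEuclideanCLM (𝕜 := ℂ) A)
    (Complex.I • toEuclideanCLM (𝕜 := ℂ) B)

lemma norm_toLp_mulVec_le (A : Matrix m m ℂ) (x : m → ℂ) :
    ‖WithLp.toLp 2 (A *ᵥ x)‖ ≤ opNorm A * ‖WithLp.toLp 2 x‖ :=
  (toEuclideanCLM (𝕜 := ℂ) A).le_opNorm (WithLp.toLp 2 x)

lemma norm_toLp_mulVec_add_mulVec_le {A B : Matrix m m ℂ} {ε : ℝ} (hA : opNorm A ≤ ε)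
    (hB : opNorm B ≤ ε) (x y : m → ℂ) :
    ‖WithLp.toLp 2 (A *ᵥ x + B *ᵥ y)‖ ≤ ε * (‖WithLp.toLp 2 x‖ + ‖WithLp.toLp 2 y‖) := by
  rw [WithLp.toLp_add, mul_add]
  refine (norm_add_le _ _).trans (add_le_add ?_ ?_)
  · exact (norm_toLp_mulVec_le A x).trans (by gcongr)
  · exact (norm_toLp_mulVec_le B y).trans (by gcongr)

lemma eq_zero_of_one_add_fromBlocks_mulVec_eq_zero {A B C D : Matrix m m ℂ} {ε : ℝ}
    (hA : opNorm A ≤ ε) (hB : opNorm B ≤ ε) (hC : opNorm C ≤ ε) (hD : opNorm D ≤ ε)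
    (hε : ε < 1 / 2) {v : m ⊕ m → ℂ} (hv : (1 + fromBlocks A B C D) *ᵥ v = 0) : v = 0 := by
  obtain ⟨x, y, rfl⟩ : ∃ x y, v = Sum.elim x y := ⟨_, _, (Sum.elim_comp_inl_inr v).symm⟩
  rw [add_mulVec, one_mulVec, fromBlocks_mulVec, Sum.elim_comp_inl, Sum.elim_comp_inr,
    ← Sum.elim_add_add, ← Sum.elim_zero_zero, Sum.elim_eq_iff] at hv
  have hx : x = -(A *ᵥ x + B *ᵥ y) := eq_neg_of_add_eq_zero_left hv.1
  have hy : y = -(C *ᵥ x + D *ᵥ y) := eq_neg_of_add_eq_zero_left hv.2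
  have hnx := norm_toLp_mulVec_add_mulVec_le hA hB x y
  have hny := norm_toLp_mulVec_add_mulVec_le hC hD x y
  rw [← norm_neg, ← WithLp.toLp_neg, ← hx] at hnx
  rw [← norm_neg, ← WithLp.toLp_neg, ← hy] at hny
  have hx0 : ‖WithLp.toLp 2 x‖ = 0 := by
    nlinarith [norm_nonneg (WithLp.toLp 2 x), norm_nonneg (WithLp.toLp 2 y)]
  have hy0 : ‖WithLp.toLp 2 y‖ = 0 := by
    nlinarith [norm_nonneg (WithLp.toLp 2 x), norm_nonneg (WithLp.toLp 2 y)]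
  simp only [norm_eq_zero, WithLp.toLp_eq_zero] at hx0 hy0
  rw [hx0, hy0, Sum.elim_zero_zero]

variable {H₁ H₂ H₃ : Matrix m m ℂ}

omit [Fintype m] [DecidableEq m] in
lemma sphS_isHermitian (h₁ : H₁.IsHermitian) (h₂ : H₂.IsHermitian) (h₃ : H₃.IsHermitian) :
    (sphS H₁ H₂ H₃).IsHermitian := by
  simp [IsHermitian, sphS, fromBlocks_conjTranspose, h₁.eq, h₂.eq, h₃.eq, sub_eq_add_neg]

omit [Fintype m] [DecidableEq m] in
lemma sphS_transpose (h₁ : H₁ᵀ = H₁) (h₂ : H₂ᵀ = H₂) (h₃ : H₃ᵀ = H₃) :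
    (sphS H₁ H₂ H₃)ᵀ = sphS H₁ (-H₂) H₃ := by
  simp [sphS, fromBlocks_transpose, h₁, h₂, h₃, sub_eq_add_neg]

lemma charpoly_neg_sphS (h₁ : H₁ᵀ = H₁) (h₂ : H₂ᵀ = H₂) (h₃ : H₃ᵀ = H₃) :
    (-sphS H₁ H₂ H₃).charpoly = (sphS H₁ H₂ H₃).charpoly := by
  let J : Matrix (m ⊕ m) (m ⊕ m) ℂ := fromBlocks 0 1 (-1) 0
  have hconj : -sphS H₁ H₂ H₃ = J * (sphS H₁ H₂ H₃)ᵀ * -J := by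
    rw [sphS_transpose h₁ h₂ h₃]
    simp [J, sphS, fromBlocks_multiply, fromBlocks_neg, sub_eq_add_neg, add_comm]
  have hJ : -J * J = 1 := by
    simp [J, fromBlocks_multiply, fromBlocks_neg, ← fromBlocks_one]
  rw [hconj, charpoly_mul_comm, ← Matrix.mul_assoc, hJ, Matrix.one_mul, charpoly_transpose]

lemma sphS_mul_self (H₁ H₂ H₃ : Matrix m m ℂ) :
    sphS H₁ H₂ H₃ * sphS H₁ H₂ H₃ = 1 + fromBlocks
      ((H₁ ^ 2 + H₂ ^ 2 + H₃ ^ 2 - 1) + Complex.I • (H₁ * H₂ - H₂ * H₁))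
      (-(H₁ * H₃ - H₃ * H₁) + Complex.I • (H₂ * H₃ - H₃ * H₂))
      ((H₁ * H₃ - H₃ * H₁) + Complex.I • (H₂ * H₃ - H₃ * H₂))
      ((H₁ ^ 2 + H₂ ^ 2 + H₃ ^ 2 - 1) - Complex.I • (H₁ * H₂ - H₂ * H₁)) := by
  rw [← fromBlocks_one, fromBlocks_add, sphS, fromBlocks_multiply]
  congr 1 <;> simp only [sq, Matrix.sub_mul, Matrix.add_mul, Matrix.mul_sub, Matrix.mul_add,
      Matrix.smul_mul, Matrix.mul_smul, smul_smul, Complex.I_mul_I, neg_one_smul,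
      Matrix.mul_neg, Matrix.neg_mul, smul_sub, smul_add, neg_neg, smul_neg] <;> abel

lemma sphS_det_ne_zero {δ : ℝ} (hδ : δ < 1 / 4) (hrep : IsSphereRep δ H₁ H₂ H₃) :
    (sphS H₁ H₂ H₃).det ≠ 0 := by
  obtain ⟨-, -, -, h₁₂, h₁₃, h₂₃, hsq⟩ := hrep
  intro hdet
  obtain ⟨v, hv0, hv⟩ := exists_mulVec_eq_zero_iff.mpr hdet
  have hv2 : (sphS H₁ H₂ H₃ * sphS H₁ H₂ H₃) *ᵥ v = 0 := by
    rw [← mulVec_mulVec, hv, mulVec_zero]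
  rw [sphS_mul_self] at hv2
  refine hv0 (eq_zero_of_one_add_fromBlocks_mulVec_eq_zero (ε := 2 * δ) ?_ ?_ ?_ ?_
    (by linarith) hv2)
  · linarith [opNorm_add_I_smul_le (H₁ ^ 2 + H₂ ^ 2 + H₃ ^ 2 - 1) (H₁ * H₂ - H₂ * H₁)]
  · linarith [opNorm_add_I_smul_le (-(H₁ * H₃ - H₃ * H₁)) (H₂ * H₃ - H₃ * H₂),
      opNorm_neg (H₁ * H₃ - H₃ * H₁)]
  · linarith [opNorm_add_I_smul_le (H₁ * H₃ - H₃ * H₁) (H₂ * H₃ - H₃ * H₂)]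
  · rw [sub_eq_add_neg, ← smul_neg]
    linarith [opNorm_add_I_smul_le (H₁ ^ 2 + H₂ ^ 2 + H₃ ^ 2 - 1) (-(H₁ * H₂ - H₂ * H₁)),
      opNorm_neg (H₁ * H₂ - H₂ * H₁)]

end AC

theorem bott_of_real_general {n : ℕ} (δ : ℝ) (hδ : δ < 1/4)
    (H₁ H₂ H₃ : Matrix (Fin n) (Fin n) ℂ)
    (hrep : AC.IsSphereRep δ H₁ H₂ H₃)
    (hreal₁ : ∀ i j, (H₁ i j).im = 0)
    (hreal₂ : ∀ i j, (H₂ i j).im = 0)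
    (hreal₃ : ∀ i j, (H₃ i j).im = 0) :
    AC.bott H₁ H₂ H₃ = 0 := by
  have hdet := AC.sphS_det_ne_zero hδ hrep
  obtain ⟨h₁, h₂, h₃, -⟩ := hrep
  have hS := AC.sphS_isHermitian h₁ h₂ h₃
  have hcount := hS.two_mul_card_pos_eigenvalues
    (AC.charpoly_neg_sphS (h₁.transpose_eq_self_of_im_eq_zero hreal₁)
      (h₂.transpose_eq_self_of_im_eq_zero hreal₂) (h₃.transpose_eq_self_of_im_eq_zero hreal₃))
    hdet
  rw [Fintype.card_sum, Fintype.card_fin] at hcount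
  rw [AC.bott, dif_pos hS, Fintype.card_fin]
  omega

/-- Lemma (`lem:realsKillIndex`): if `(H₁,H₂,H₃)` is a δ-representation of the sphere
with `0 ≤ δ < 1/4` and all entries of `H₁, H₂, H₃` are real, then
`bott(H₁,H₂,H₃) = 0`. -/
theorem bott_of_real {n : ℕ} (δ : ℝ) (hδ0 : 0 ≤ δ) (hδ : δ < 1/4)
    (H₁ H₂ H₃ : Matrix (Fin n) (Fin n) ℂ)
    (hrep : AC.IsSphereRep δ H₁ H₂ H₃)
    (hreal₁ : ∀ i j, (H₁ i j).im = 0)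
    (hreal₂ : ∀ i j, (H₂ i j).im = 0)
    (hreal₃ : ∀ i j, (H₃ i j).im = 0) :
    AC.bott H₁ H₂ H₃ = 0 :=
  bott_of_real_general δ hδ H₁ H₂ H₃ hrep hreal₁ hreal₂ hreal₃
end
end

section
/- Let 0 ≤ δ < 1/4 and let (H₁, H₂, H₃) be a δ-representation of the sphere by 2N×2N complex matrices. If each H_r is self-dual, meaning Z H_rᵀ Z = −H_r where Z is the 2N×2N block matrix [[0, I],[−I, 0]], then bott(H₁, H₂, H₃) = 0. -/
open scoped Matrix.Norms.L2Operator

set_option maxHeartbeats 1000000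


open Matrix

noncomputable section

section Aux

lemma opNorm_eq_norm {m : Type*} [Fintype m] [DecidableEq m] (A : Matrix m m ℂ) :
    AC.opNorm A = ‖A‖ := rfl

lemma euclid_norm_sq {m : Type*} [Fintype m] (x : EuclideanSpace ℂ m) :
    ‖x‖ ^ 2 = ∑ i, ‖x i‖ ^ 2 := by
  rw [EuclideanSpace.norm_eq, Real.sq_sqrt (by positivity)]

lemma euclid_split {m n : Type*} [Fintype m] [Fintype n] (f : m → ℂ) (g : n → ℂ) :
    ‖(EuclideanSpace.equiv (m ⊕ n) ℂ).symm (Sum.elim f g)‖ ^ 2 =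
      ‖(EuclideanSpace.equiv m ℂ).symm f‖ ^ 2 + ‖(EuclideanSpace.equiv n ℂ).symm g‖ ^ 2 := by
  simp [euclid_norm_sq, Fintype.sum_sum_type]

lemma norm_fromBlocks_le {m : Type*} [Fintype m] [DecidableEq m]
    (A B C D : Matrix m m ℂ) {c : ℝ}
    (hA : ‖A‖ ≤ c) (hB : ‖B‖ ≤ c) (hC : ‖C‖ ≤ c) (hD : ‖D‖ ≤ c) :
    ‖Matrix.fromBlocks A B C D‖ ≤ 2 * c := by
  have hc : 0 ≤ c := le_trans (norm_nonneg A) hA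
  rw [Matrix.l2_opNorm_def]
  apply ContinuousLinearMap.opNorm_le_bound _ (by positivity)
  intro x
  set x₁ : EuclideanSpace ℂ m := (EuclideanSpace.equiv m ℂ).symm (fun i => x (Sum.inl i)) with hx₁
  set x₂ : EuclideanSpace ℂ m := (EuclideanSpace.equiv m ℂ).symm (fun i => x (Sum.inr i)) with hx₂
  have hv : (Matrix.toEuclideanLin.trans LinearMap.toContinuousLinearMap (Matrix.fromBlocks A B C D)) x
      = (EuclideanSpace.equiv (m ⊕ m) ℂ).symm ((Matrix.fromBlocks A B C D) *ᵥ ⇑x) := rfl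
  have hmv : (Matrix.fromBlocks A B C D) *ᵥ ⇑x =
      Sum.elim ((A *ᵥ ⇑x₁) + (B *ᵥ ⇑x₂)) ((C *ᵥ ⇑x₁) + (D *ᵥ ⇑x₂)) := by
    rw [Matrix.fromBlocks_mulVec]; rfl
  have hxsq : ‖x‖ ^ 2 = ‖x₁‖ ^ 2 + ‖x₂‖ ^ 2 := by
    have : x = (EuclideanSpace.equiv (m ⊕ m) ℂ).symm
        (Sum.elim (fun i => x (Sum.inl i)) (fun i => x (Sum.inr i))) := by
      apply (EuclideanSpace.equiv (m ⊕ m) ℂ).injective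
      ext (i | i) <;> rfl
    rw [this, euclid_split, ← hx₁, ← hx₂]
  have hb1 : ‖(EuclideanSpace.equiv m ℂ).symm ((A *ᵥ ⇑x₁) + (B *ᵥ ⇑x₂))‖ ≤ c * ‖x₁‖ + c * ‖x₂‖ := by
    have he : (EuclideanSpace.equiv m ℂ).symm ((A *ᵥ ⇑x₁) + (B *ᵥ ⇑x₂)) =
        (EuclideanSpace.equiv m ℂ).symm (A *ᵥ ⇑x₁) + (EuclideanSpace.equiv m ℂ).symm (B *ᵥ ⇑x₂) :=
      map_add _ _ _
    rw [he]
    refine (norm_add_le _ _).trans ?_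
    gcongr
    · exact (Matrix.l2_opNorm_mulVec A x₁).trans (by gcongr)
    · exact (Matrix.l2_opNorm_mulVec B x₂).trans (by gcongr)
  have hb2 : ‖(EuclideanSpace.equiv m ℂ).symm ((C *ᵥ ⇑x₁) + (D *ᵥ ⇑x₂))‖ ≤ c * ‖x₁‖ + c * ‖x₂‖ := by
    have he : (EuclideanSpace.equiv m ℂ).symm ((C *ᵥ ⇑x₁) + (D *ᵥ ⇑x₂)) =
        (EuclideanSpace.equiv m ℂ).symm (C *ᵥ ⇑x₁) + (EuclideanSpace.equiv m ℂ).symm (D *ᵥ ⇑x₂) :=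
      map_add _ _ _
    rw [he]
    refine (norm_add_le _ _).trans ?_
    gcongr
    · exact (Matrix.l2_opNorm_mulVec C x₁).trans (by gcongr)
    · exact (Matrix.l2_opNorm_mulVec D x₂).trans (by gcongr)
  have key : ∀ u v a b : ℝ, 0 ≤ u → 0 ≤ v → 0 ≤ a → 0 ≤ b → u ≤ c * a + c * b →
      v ≤ c * a + c * b → u ^ 2 + v ^ 2 ≤ (2 * c) ^ 2 * (a ^ 2 + b ^ 2) := by
    intro u v a b hu hv ha hb h1 h2
    nlinarith [sq_nonneg (a - b), sq_nonneg (c * a + c * b), mul_nonneg hc ha, mul_nonneg hc hb]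
  have hsq : ‖(Matrix.toEuclideanLin.trans LinearMap.toContinuousLinearMap (Matrix.fromBlocks A B C D)) x‖ ^ 2
      ≤ (2 * c * ‖x‖) ^ 2 := by
    rw [hv, hmv, euclid_split]
    have := key _ _ _ _ (norm_nonneg _) (norm_nonneg _) (norm_nonneg x₁) (norm_nonneg x₂) hb1 hb2
    calc _ ≤ (2 * c) ^ 2 * (‖x₁‖ ^ 2 + ‖x₂‖ ^ 2) := this
      _ = (2 * c * ‖x‖) ^ 2 := by rw [← hxsq]; ring
  calc ‖(Matrix.toEuclideanLin.trans LinearMap.toContinuousLinearMap (Matrix.fromBlocks A B C D)) x‖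
      = Real.sqrt (‖(Matrix.toEuclideanLin.trans LinearMap.toContinuousLinearMap (Matrix.fromBlocks A B C D)) x‖ ^ 2) := by
        rw [Real.sqrt_sq (norm_nonneg _)]
    _ ≤ Real.sqrt ((2 * c * ‖x‖) ^ 2) := Real.sqrt_le_sqrt hsq
    _ = 2 * c * ‖x‖ := Real.sqrt_sq (by positivity)

/-- Characteristic-polynomial-style determinant formula for Hermitian matrices. -/
lemma det_smul_one_sub_herm {n : Type*} [Fintype n] [DecidableEq n]
    {A : Matrix n n ℂ} (hA : A.IsHermitian) (t : ℂ) :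
    det (t • (1 : Matrix n n ℂ) - A) = ∏ i, (t - (hA.eigenvalues i : ℂ)) := by
  set U : Matrix n n ℂ := (hA.eigenvectorUnitary : Matrix n n ℂ) with hU
  have hUU : U * star U = 1 := Matrix.mem_unitaryGroup_iff.mp hA.eigenvectorUnitary.2
  have e : U * (t • (1 : Matrix n n ℂ) - Matrix.diagonal (RCLike.ofReal ∘ hA.eigenvalues)) * star U
      = t • (1 : Matrix n n ℂ) - A := by
    conv_rhs => rw [hA.spectral_theorem]
    rw [mul_sub, sub_mul]
    congr 1
    rw [mul_smul_comm, mul_one, smul_mul_assoc, hUU]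
  have hdets : det U * det (star U) = 1 := by rw [← det_mul, hUU, det_one]
  calc det (t • (1 : Matrix n n ℂ) - A)
      = det (U * (t • (1 : Matrix n n ℂ) - Matrix.diagonal (RCLike.ofReal ∘ hA.eigenvalues)) * star U) := by rw [e]
    _ = det U * det (star U) *
        det (t • (1 : Matrix n n ℂ) - Matrix.diagonal (RCLike.ofReal ∘ hA.eigenvalues)) := by
        rw [det_mul, det_mul]; ring
    _ = det (t • (1 : Matrix n n ℂ) - Matrix.diagonal (RCLike.ofReal ∘ hA.eigenvalues)) := by
        rw [hdets, one_mul]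
    _ = ∏ i, (t - (hA.eigenvalues i : ℂ)) := by
        rw [Matrix.smul_one_eq_diagonal, Matrix.diagonal_sub, det_diagonal]
        simp

end Aux

/-- Lemma (`lem:dualsKillIndex`): if `(H₁,H₂,H₃)` is a δ-representation of the sphere by
`2N×2N` matrices with `0 ≤ δ < 1/4`, and each `Hᵣ` is self-dual (`Z Hᵣᵀ Z = −Hᵣ` for
`Z = [[0, I], [−I, 0]]`), then `bott(H₁,H₂,H₃) = 0`. -/
theorem bott_of_selfDual {N : ℕ} (δ : ℝ) (hδ0 : 0 ≤ δ) (hδ : δ < 1/4)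
    (H₁ H₂ H₃ : Matrix (Fin N ⊕ Fin N) (Fin N ⊕ Fin N) ℂ)
    (hrep : AC.IsSphereRep δ H₁ H₂ H₃)
    (Z : Matrix (Fin N ⊕ Fin N) (Fin N ⊕ Fin N) ℂ)
    (hZ : Z = Matrix.fromBlocks 0 1 (-1) 0)
    (hsd₁ : Z * H₁ᵀ * Z = -H₁)
    (hsd₂ : Z * H₂ᵀ * Z = -H₂)
    (hsd₃ : Z * H₃ᵀ * Z = -H₃) :
    AC.bott H₁ H₂ H₃ = 0 := by
  classical
  obtain ⟨h1h, h2h, h3h, hc12, hc13, hc23, hsq⟩ := hrep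
  set L : Matrix (Fin N ⊕ Fin N) (Fin N ⊕ Fin N) ℂ := H₁ - Complex.I • H₂ with hL
  set M : Matrix (Fin N ⊕ Fin N) (Fin N ⊕ Fin N) ℂ := H₁ + Complex.I • H₂ with hM
  set S : Matrix ((Fin N ⊕ Fin N) ⊕ (Fin N ⊕ Fin N)) ((Fin N ⊕ Fin N) ⊕ (Fin N ⊕ Fin N)) ℂ := AC.sphS H₁ H₂ H₃ with hSdef
  have hSblocks : S = Matrix.fromBlocks H₃ L M (-H₃) := rfl
  -- Hermitian
  have hS : S.IsHermitian := by
    rw [Matrix.IsHermitian, hSblocks, Matrix.fromBlocks_conjTranspose]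
    rw [hL, hM]
    simp [Matrix.conjTranspose_sub, Matrix.conjTranspose_add, Matrix.conjTranspose_smul,
      Complex.star_def, Complex.conj_I, h1h.eq, h2h.eq, h3h.eq, neg_smul, sub_eq_add_neg]
  -- Z facts
  have hZZ : Z * Z = -1 := by
    rw [hZ, Matrix.fromBlocks_multiply]
    simp only [Matrix.zero_mul, Matrix.mul_zero, zero_add, add_zero, Matrix.mul_one,
      Matrix.one_mul, Matrix.neg_mul, Matrix.mul_neg, neg_zero, Matrix.zero_mul]
    ext (i | i) (j | j) <;>
      simp [Matrix.fromBlocks, Matrix.one_apply]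
  -- transported self-duality
  have zkey : ∀ H : Matrix (Fin N ⊕ Fin N) (Fin N ⊕ Fin N) ℂ,
      Z * Hᵀ * Z = -H → Z * H * Z = -Hᵀ := by
    intro H h
    have e1 : Z * (Z * Hᵀ * Z) * Z = Hᵀ := by
      rw [show Z * (Z * Hᵀ * Z) * Z = (Z * Z) * Hᵀ * (Z * Z) by noncomm_ring, hZZ]
      noncomm_ring
    rw [← e1, h]
    noncomm_ring
  have hz1 := zkey H₁ hsd₁
  have hz2 := zkey H₂ hsd₂
  have hz3 := zkey H₃ hsd₃
  have hzL : Z * L * Z = -Lᵀ := by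
    rw [hL, Matrix.transpose_sub, Matrix.transpose_smul]
    rw [mul_sub, sub_mul, mul_smul_comm, smul_mul_assoc, hz1, hz2]
    simp only [smul_neg, sub_eq_add_neg, neg_neg]
    abel
  have hzM : Z * M * Z = -Mᵀ := by
    rw [hM, Matrix.transpose_add, Matrix.transpose_smul]
    rw [mul_add, add_mul, mul_smul_comm, smul_mul_assoc, hz1, hz2]
    simp only [smul_neg, neg_add_rev]
    abel
  -- the symmetry matrix V
  set V : Matrix ((Fin N ⊕ Fin N) ⊕ (Fin N ⊕ Fin N)) ((Fin N ⊕ Fin N) ⊕ (Fin N ⊕ Fin N)) ℂ :=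
    Matrix.fromBlocks 0 Z (-Z) 0 with hV
  have hVV : V * V = 1 := by
    rw [hV, Matrix.fromBlocks_multiply]
    simp only [Matrix.zero_mul, Matrix.mul_zero, zero_add, add_zero, Matrix.mul_neg,
      Matrix.neg_mul, neg_zero, hZZ, neg_neg]
    exact Matrix.fromBlocks_one
  have hVSV : V * S * V = -Sᵀ := by
    rw [hSblocks, hV, Matrix.fromBlocks_transpose, Matrix.fromBlocks_multiply,
      Matrix.fromBlocks_multiply]
    rw [show -(Matrix.fromBlocks H₃ᵀ Mᵀ Lᵀ (-H₃)ᵀ) =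
      Matrix.fromBlocks (-H₃ᵀ) (-Mᵀ) (-Lᵀ) (-(-H₃)ᵀ) from Matrix.fromBlocks_neg _ _ _ _]
    rw [Matrix.fromBlocks_inj]
    refine ⟨?_, ?_, ?_, ?_⟩
    · rw [← hz3]; noncomm_ring
    · rw [← hzM]; noncomm_ring
    · rw [← hzL]; noncomm_ring
    · rw [Matrix.transpose_neg, neg_neg,
        show (-Z * H₃ + 0 * M) * Z + (-Z * L + 0 * -H₃) * 0 = -(Z * H₃ * Z) from by noncomm_ring,
        hz3, neg_neg]
  -- determinant symmetry
  have hdetV : det V * det V = 1 := by rw [← det_mul, hVV, det_one]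
  have hdetsym : ∀ t : ℂ, det (t • (1 : Matrix _ _ ℂ) - S) = det (t • (1 : Matrix _ _ ℂ) + S) := by
    intro t
    have e : V * (t • (1 : Matrix _ _ ℂ) - S) * V = t • (1 : Matrix _ _ ℂ) + Sᵀ := by
      rw [mul_sub, sub_mul, mul_smul_comm, mul_one, smul_mul_assoc, hVV, hVSV, sub_neg_eq_add]
    calc det (t • (1 : Matrix _ _ ℂ) - S)
        = det V * det V * det (t • (1 : Matrix _ _ ℂ) - S) := by rw [hdetV, one_mul]
      _ = det (V * (t • (1 : Matrix _ _ ℂ) - S) * V) := by rw [det_mul, det_mul]; ring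
      _ = det (t • (1 : Matrix _ _ ℂ) + Sᵀ) := by rw [e]
      _ = det ((t • (1 : Matrix _ _ ℂ) + S)ᵀ) := by
          rw [Matrix.transpose_add, Matrix.transpose_smul, Matrix.transpose_one]
      _ = det (t • (1 : Matrix _ _ ℂ) + S) := Matrix.det_transpose _
  -- the square of S is close to 1
  have hE1 : H₃ * H₃ + L * M - 1 =
      (H₁ ^ 2 + H₂ ^ 2 + H₃ ^ 2 - 1) + Complex.I • (H₁ * H₂ - H₂ * H₁) := by
    rw [hL, hM]
    simp only [sub_mul, mul_add, mul_sub, add_mul, smul_mul_assoc, mul_smul_comm, smul_smul,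
      Complex.I_mul_I, neg_one_smul, smul_sub, smul_add, pow_two]
    abel
  have hE4 : M * L + (-H₃) * (-H₃) - 1 =
      (H₁ ^ 2 + H₂ ^ 2 + H₃ ^ 2 - 1) - Complex.I • (H₁ * H₂ - H₂ * H₁) := by
    rw [hL, hM]
    simp only [sub_mul, mul_add, mul_sub, add_mul, smul_mul_assoc, mul_smul_comm, smul_smul,
      Complex.I_mul_I, neg_one_smul, smul_sub, smul_add, pow_two, Matrix.neg_mul,
      Matrix.mul_neg, neg_neg]
    abel
  have hE2 : H₃ * L + L * (-H₃) =
      -(H₁ * H₃ - H₃ * H₁) + Complex.I • (H₂ * H₃ - H₃ * H₂) := by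
    rw [hL]
    simp only [sub_mul, mul_sub, smul_mul_assoc, mul_smul_comm, smul_sub, Matrix.mul_neg,
      Matrix.neg_mul, neg_sub, neg_neg, smul_neg]
    abel
  have hE3 : M * H₃ + (-H₃) * M =
      (H₁ * H₃ - H₃ * H₁) + Complex.I • (H₂ * H₃ - H₃ * H₂) := by
    rw [hM]
    simp only [add_mul, mul_add, smul_mul_assoc, mul_smul_comm, smul_sub, smul_add,
      Matrix.mul_neg, Matrix.neg_mul, neg_add_rev, neg_neg, smul_neg]
    abel
  have hSSblocks : S * S - 1 =
      Matrix.fromBlocks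
        ((H₁ ^ 2 + H₂ ^ 2 + H₃ ^ 2 - 1) + Complex.I • (H₁ * H₂ - H₂ * H₁))
        (-(H₁ * H₃ - H₃ * H₁) + Complex.I • (H₂ * H₃ - H₃ * H₂))
        ((H₁ * H₃ - H₃ * H₁) + Complex.I • (H₂ * H₃ - H₃ * H₂))
        ((H₁ ^ 2 + H₂ ^ 2 + H₃ ^ 2 - 1) - Complex.I • (H₁ * H₂ - H₂ * H₁)) := by
    rw [hSblocks, Matrix.fromBlocks_multiply, ← hE1, ← hE2, ← hE3, ← hE4,
      show (1 : Matrix ((Fin N ⊕ Fin N) ⊕ (Fin N ⊕ Fin N)) ((Fin N ⊕ Fin N) ⊕ (Fin N ⊕ Fin N)) ℂ)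
        = Matrix.fromBlocks 1 0 0 1 from Matrix.fromBlocks_one.symm]
    rw [sub_eq_add_neg, show -(Matrix.fromBlocks (1 : Matrix (Fin N ⊕ Fin N) (Fin N ⊕ Fin N) ℂ) 0 0 1)
      = Matrix.fromBlocks (-1) (-0) (-0) (-1) from Matrix.fromBlocks_neg _ _ _ _,
      Matrix.fromBlocks_add]
    rw [Matrix.fromBlocks_inj]
    refine ⟨by abel, by simp, by simp, by abel⟩
  -- norm bounds
  have hnc12 : ‖H₁ * H₂ - H₂ * H₁‖ ≤ δ := hc12
  have hnc13 : ‖H₁ * H₃ - H₃ * H₁‖ ≤ δ := hc13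
  have hnc23 : ‖H₂ * H₃ - H₃ * H₂‖ ≤ δ := hc23
  have hnsq : ‖H₁ ^ 2 + H₂ ^ 2 + H₃ ^ 2 - 1‖ ≤ δ := hsq
  have hIs : ∀ X : Matrix (Fin N ⊕ Fin N) (Fin N ⊕ Fin N) ℂ, ‖Complex.I • X‖ = ‖X‖ := by
    intro X
    rw [norm_smul, Complex.norm_I, one_mul]
  have hb1 : ‖(H₁ ^ 2 + H₂ ^ 2 + H₃ ^ 2 - 1) + Complex.I • (H₁ * H₂ - H₂ * H₁)‖ ≤ 2 * δ := by
    refine (norm_add_le _ _).trans ?_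
    rw [hIs]; linarith
  have hb4 : ‖(H₁ ^ 2 + H₂ ^ 2 + H₃ ^ 2 - 1) - Complex.I • (H₁ * H₂ - H₂ * H₁)‖ ≤ 2 * δ := by
    refine (norm_sub_le _ _).trans ?_
    rw [hIs]; linarith
  have hb2 : ‖-(H₁ * H₃ - H₃ * H₁) + Complex.I • (H₂ * H₃ - H₃ * H₂)‖ ≤ 2 * δ := by
    refine (norm_add_le _ _).trans ?_
    rw [hIs, norm_neg]; linarith
  have hb3 : ‖(H₁ * H₃ - H₃ * H₁) + Complex.I • (H₂ * H₃ - H₃ * H₂)‖ ≤ 2 * δ := by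
    refine (norm_add_le _ _).trans ?_
    rw [hIs]; linarith
  have hSS1 : ‖S * S - 1‖ ≤ 4 * δ := by
    rw [hSSblocks]
    have := norm_fromBlocks_le _ _ _ _ hb1 hb2 hb3 hb4
    linarith
  -- S is invertible
  haveI : CompleteSpace
      (Matrix ((Fin N ⊕ Fin N) ⊕ (Fin N ⊕ Fin N)) ((Fin N ⊕ Fin N) ⊕ (Fin N ⊕ Fin N)) ℂ) :=
    FiniteDimensional.complete ℂ _
  have hlt : ‖1 - S * S‖ < 1 := by
    rw [← neg_sub, norm_neg]; linarith
  have hunitSS : IsUnit (S * S) := by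
    have := (Units.oneSub (1 - S * S) hlt).isUnit
    simpa using this
  have hdetS : det S ≠ 0 := by
    have h1 : IsUnit (S * S).det := (Matrix.isUnit_iff_isUnit_det _).mp hunitSS
    rw [Matrix.det_mul] at h1
    intro h0
    rw [h0, mul_zero] at h1
    exact not_isUnit_zero h1
  -- eigenvalue multiset
  set eig : (Fin N ⊕ Fin N) ⊕ (Fin N ⊕ Fin N) → ℝ := hS.eigenvalues with heig
  set μ : Multiset ℝ := Finset.univ.val.map eig with hμdef
  set ν : Multiset ℂ := Finset.univ.val.map (fun i => (eig i : ℂ)) with hνdef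
  have hνμ : ν = μ.map (fun a : ℝ => (a : ℂ)) := by
    rw [hνdef, hμdef, Multiset.map_map]
    rfl
  have hcard2 : Fintype.card ((Fin N ⊕ Fin N) ⊕ (Fin N ⊕ Fin N)) = 2 * Fintype.card (Fin N ⊕ Fin N) := by
    simp [Fintype.card_sum]; ring
  -- determinant products
  have hminus : ∀ t : ℂ, det (t • (1 : Matrix _ _ ℂ) - S) = ∏ i, (t - (eig i : ℂ)) :=
    fun t => det_smul_one_sub_herm hS t
  have hplus : ∀ t : ℂ, det (t • (1 : Matrix _ _ ℂ) + S) = ∏ i, (t + (eig i : ℂ)) := by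
    intro t
    have h1 : t • (1 : Matrix ((Fin N ⊕ Fin N) ⊕ (Fin N ⊕ Fin N)) ((Fin N ⊕ Fin N) ⊕ (Fin N ⊕ Fin N)) ℂ) + S
        = -((-t) • 1 - S) := by
      rw [neg_sub, neg_smul, sub_neg_eq_add, add_comm]
    rw [h1, Matrix.det_neg, hminus (-t)]
    have h2 : ∏ i, (-t - (eig i : ℂ)) =
        (-1 : ℂ) ^ Fintype.card ((Fin N ⊕ Fin N) ⊕ (Fin N ⊕ Fin N)) * ∏ i, (t + (eig i : ℂ)) := by
      calc ∏ i, (-t - (eig i : ℂ)) = ∏ i, (-1 : ℂ) * (t + (eig i : ℂ)) :=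
            Finset.prod_congr rfl (fun i _ => by ring)
        _ = (∏ _i : (Fin N ⊕ Fin N) ⊕ (Fin N ⊕ Fin N), (-1 : ℂ)) * ∏ i, (t + (eig i : ℂ)) :=
            Finset.prod_mul_distrib
        _ = (-1 : ℂ) ^ Fintype.card ((Fin N ⊕ Fin N) ⊕ (Fin N ⊕ Fin N)) * ∏ i, (t + (eig i : ℂ)) := by
            rw [Finset.prod_const, Finset.card_univ]
    rw [h2, ← mul_assoc, ← mul_pow]
    norm_num
  -- polynomial identity
  have hννn : ν = ν.map (fun a => -a) := by
    have e3 : ∀ t : ℂ, Polynomial.eval t (ν.map fun a => Polynomial.X - Polynomial.C a).prod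
        = ∏ i, (t - (eig i : ℂ)) := by
      intro t
      rw [Polynomial.eval_multiset_prod, hνdef, Multiset.map_map, Multiset.map_map]
      refine Eq.trans (congrArg Multiset.prod
        ((Multiset.map_congr rfl fun i _ => by simp :
          _ = Multiset.map (fun i => t - (eig i : ℂ)) Finset.univ.val))) rfl
    have e4 : ∀ t : ℂ, Polynomial.eval t (ν.map fun a => Polynomial.X - Polynomial.C (-a)).prod
        = ∏ i, (t + (eig i : ℂ)) := by
      intro t
      rw [Polynomial.eval_multiset_prod, hνdef, Multiset.map_map, Multiset.map_map]
      refine Eq.trans (congrArg Multiset.prod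
        ((Multiset.map_congr rfl fun i _ => by simp :
          _ = Multiset.map (fun i => t + (eig i : ℂ)) Finset.univ.val))) rfl
    have hpq : (ν.map fun a => Polynomial.X - Polynomial.C a).prod
        = (ν.map fun a => Polynomial.X - Polynomial.C (-a)).prod := by
      apply Polynomial.funext
      intro t
      rw [e3, e4, ← hminus, ← hplus, hdetsym]
    have hr1 : (ν.map fun a => Polynomial.X - Polynomial.C a).prod.roots = ν :=
      Polynomial.roots_multiset_prod_X_sub_C ν
    have hr2 : (ν.map fun a => Polynomial.X - Polynomial.C (-a)).prod.roots = ν.map (fun a => -a) := by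
      have e : (ν.map fun a => Polynomial.X - Polynomial.C (-a))
          = ((ν.map fun a => -a).map fun a => Polynomial.X - Polynomial.C a) := by
        conv_rhs => rw [Multiset.map_map]
        rfl
      rw [e, Polynomial.roots_multiset_prod_X_sub_C]
    have := congrArg Polynomial.roots hpq
    rw [hr1, hr2] at this
    exact this
  have hμn : μ = μ.map (fun a => -a) := by
    apply Multiset.map_injective (Complex.ofReal_injective)
    rw [← hνμ, Multiset.map_map]
    have : ((fun a : ℝ => (a : ℂ)) ∘ fun a => -a) = (fun a => -a) ∘ (fun a : ℝ => (a : ℂ)) := by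
      funext a; simp
    rw [this, ← Multiset.map_map, ← hνμ, ← hννn]
  -- no zero eigenvalues
  have hne : ∀ i, eig i ≠ 0 := by
    intro i h0
    apply hdetS
    rw [hS.det_eq_prod_eigenvalues]
    exact Finset.prod_eq_zero (Finset.mem_univ i) (by rw [← heig, h0]; simp)
  have hx0 : ∀ x ∈ μ, x ≠ 0 := by
    intro x hx
    rw [hμdef] at hx
    obtain ⟨i, _, rfl⟩ := Multiset.mem_map.mp hx
    exact hne i
  -- counting
  have hmapcnt : ∀ (s : Multiset ℝ) (p : ℝ → Prop) [DecidablePred p],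
      (s.map (fun a => -a)).countP p = s.countP (fun a => p (-a)) := by
    intro s p _
    rw [Multiset.countP_map, Multiset.countP_eq_card_filter]
  have hposneg : μ.countP (fun a => 0 < a) = μ.countP (fun a => a < 0) := by
    have h1 : μ.countP (fun a => 0 < a) = (μ.map fun a => -a).countP (fun a => 0 < a) := by
      conv_lhs => rw [hμn]
    rw [h1, hmapcnt]
    exact Multiset.countP_congr rfl (fun x _ => by simp [eq_iff_iff, neg_pos])
  have htot : μ.countP (fun a => 0 < a) + μ.countP (fun a => a < 0) = Multiset.card μ := by
    have h1 := Multiset.card_eq_countP_add_countP (fun a : ℝ => 0 < a) μ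
    have h2 : μ.countP (fun a => ¬ 0 < a) = μ.countP (fun a => a < 0) :=
      Multiset.countP_congr rfl (fun x hx => by
        have hne' := hx0 x hx
        simp only [eq_iff_iff, not_lt]
        exact ⟨fun h => lt_of_le_of_ne h hne', fun h => le_of_lt h⟩)
    rw [h1, h2]
  have hcardμ : Multiset.card μ = Fintype.card ((Fin N ⊕ Fin N) ⊕ (Fin N ⊕ Fin N)) := by
    rw [hμdef, Multiset.card_map]
    exact Finset.card_univ
  -- put it all together
  unfold AC.bott
  rw [dif_pos hS]
  have hfil : (Finset.univ.filter fun i => 0 < hS.eigenvalues i).card = μ.countP (fun a => 0 < a) := by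
    rw [hμdef, Multiset.countP_map]
    have e0 : (Finset.univ.filter fun i => 0 < hS.eigenvalues i).card
        = Multiset.card ((Finset.univ.filter fun i => 0 < hS.eigenvalues i).val) := rfl
    rw [e0, Finset.filter_val]
  have hP : μ.countP (fun a => 0 < a) = Fintype.card (Fin N ⊕ Fin N) := by
    have := htot
    rw [hposneg] at this  -- careful: rewrites first occurrence?
    rw [hcardμ, hcard2] at this
    omega
  rw [hfil, hP]
  simp
end
end

section
/- Let δ ≥ 0, let U be a unitary n×n complex matrix and K a Hermitian n×n matrix with ‖K‖ ≤ 1 and ‖[U, K]‖ ≤ δ. Define H₁ = K, H₂ = (1/2)(U(I − K²)^{1/2} + (I − K²)^{1/2}U*), and H₃ = (i/2)(−U(I − K²)^{1/2} + (I − K²)^{1/2}U*), where (I − K²)^{1/2} is the positive semidefinite square root of I − K². Then (H₁, H₂, H₃) is a δ-representation of the sphere: each H_r is Hermitian, ‖[H_r, H_s]‖ ≤ δ for all r ≠ s, and ‖H₁² + H₂² + H₃² − I‖ ≤ δ. -/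
open Matrix
open scoped ComplexOrder

noncomputable section

/-- The positive semidefinite square root of a positive semidefinite matrix (as defined in
the older Mathlib, where it was `Matrix.PosSemidef.sqrt`). -/
def Matrix.PosSemidef.sqrt {n : Type*} [Fintype n] [DecidableEq n] {A : Matrix n n ℂ}
    (hA : A.PosSemidef) : Matrix n n ℂ :=
  hA.1.eigenvectorUnitary.1 * diagonal ((↑) ∘ (√·) ∘ hA.1.eigenvalues) *
  (star hA.1.eigenvectorUnitary : Matrix n n ℂ)

/-!
With `W = U R`, the matrices `H₂` and `H₃` are the real and imaginary parts of `W`. Hence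
`[H₂, H₃]` and `H₂² + H₃²` are governed by `W*W = R² = 1 - K²` and `WW* = U (1 - K²) U*`, and both
defects from the sphere relations are, up to a factor of modulus `1/2`, the element
`U K² U* - K²`, a unitary multiple of `[U, K] K + K [U, K]`. Since `R` commutes with `K`,
`[K, W] = [U, K] R` up to sign, which bounds the commutators of `K` with `H₂` and `H₃`. Every step
except the construction of `R` works in an arbitrary C⋆-algebra, for `u` unitary and `k`, `r`
commuting self-adjoint elements with `k² + r² = 1`.
-/

open Complex
open scoped ComplexStarModule MatrixOrder Matrix.Norms.L2Operator

section StarRing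

variable {A : Type*} [Ring A] [StarRing A] {u k r : A}

lemma star_mul_self_sub_self_mul_star_unitary_mul (hu : u ∈ unitary A) (hr : IsSelfAdjoint r)
    (hkr : k * k + r * r = 1) :
    star (u * r) * (u * r) - u * r * star (u * r) = u * (k * k) * star u - k * k := by
  have hrr : r * r = 1 - k * k := eq_sub_of_add_eq' hkr
  calc star (u * r) * (u * r) - u * r * star (u * r)
      = r * (star u * u) * r - u * (r * r) * star u := by
        rw [star_mul, hr.star_eq]; noncomm_ring
    _ = u * (k * k) * star u - k * k := by
        rw [Unitary.star_mul_self_of_mem hu, hrr, mul_one, hrr, mul_sub, sub_mul, mul_one,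
          Unitary.mul_star_self_of_mem hu]
        abel

end StarRing

section StarAlgebra

variable {A : Type*} [Ring A] [StarRing A] [Algebra ℂ A] [StarModule ℂ A] {k : A}

lemma coe_realPart_eq_half_smul (w : A) : (ℜ w : A) = (1 / 2 : ℂ) • (w + star w) := by
  rw [realPart_apply_coe]
  match_scalars <;> simp

lemma coe_imaginaryPart_eq_I_half_smul (w : A) :
    (ℑ w : A) = (I / 2) • (-w + star w) := by
  rw [imaginaryPart_apply_coe]
  match_scalars <;> simp <;> ring

lemma IsSelfAdjoint.mul_realPart_sub_realPart_mul (hk : IsSelfAdjoint k) (w : A) :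
    k * ℜ w - ℜ w * k = I • (ℑ (k * w - w * k) : A) := by
  simp only [realPart_apply_coe, imaginaryPart_apply_coe, star_sub, star_mul, hk.star_eq,
    mul_smul_comm, smul_mul_assoc, mul_add, add_mul]
  match_scalars <;> ring_nf <;> norm_num [I_sq]

lemma IsSelfAdjoint.mul_imaginaryPart_sub_imaginaryPart_mul (hk : IsSelfAdjoint k) (w : A) :
    k * ℑ w - ℑ w * k = -I • (ℜ (k * w - w * k) : A) := by
  simp only [realPart_apply_coe, imaginaryPart_apply_coe, star_sub, star_mul, hk.star_eq,
    mul_smul_comm, smul_mul_assoc, mul_sub, sub_mul]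
  match_scalars <;> ring

end StarAlgebra

section CStarAlgebra

variable {A : Type*} [CStarAlgebra A] {u k r : A}

lemma norm_commutator_mul_le_of_commute (hrk : Commute r k) (hr : ‖r‖ ≤ 1) :
    ‖k * (u * r) - u * r * k‖ ≤ ‖u * k - k * u‖ := calc
  ‖k * (u * r) - u * r * k‖ = ‖(u * k - k * u) * r‖ := by
    rw [← norm_neg, mul_assoc u r k, hrk.eq]
    noncomm_ring
  _ ≤ ‖u * k - k * u‖ * ‖r‖ := norm_mul_le _ _
  _ ≤ ‖u * k - k * u‖ := mul_le_of_le_one_right (norm_nonneg _) hr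

lemma norm_conj_mul_self_sub_mul_self_le (hu : u ∈ unitary A) (hk : ‖k‖ ≤ 1) :
    ‖u * (k * k) * star u - k * k‖ ≤ 2 * ‖u * k - k * u‖ := calc
  ‖u * (k * k) * star u - k * k‖ = ‖(u * k - k * u) * k + k * (u * k - k * u)‖ := by
    rw [← CStarRing.norm_mul_mem_unitary _ hu, sub_mul, mul_assoc _ (star u) u,
      Unitary.star_mul_self_of_mem hu]
    noncomm_ring
  _ ≤ ‖u * k - k * u‖ * ‖k‖ + ‖k‖ * ‖u * k - k * u‖ :=
    (norm_add_le _ _).trans (add_le_add (norm_mul_le _ _) (norm_mul_le _ _))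
  _ ≤ 2 * ‖u * k - k * u‖ := by nlinarith [norm_nonneg (u * k - k * u)]

end CStarAlgebra

section StarOrderedCStarAlgebra

variable {A : Type*} [CStarAlgebra A] [PartialOrder A] [StarOrderedRing A] {u k r : A}

lemma IsSelfAdjoint.mul_self_le_one_of_norm_le_one (hk : IsSelfAdjoint k) (h : ‖k‖ ≤ 1) :
    k * k ≤ 1 := by
  refine (CStarAlgebra.norm_le_one_iff_of_nonneg _ hk.mul_self_nonneg).mp ?_
  rw [hk.norm_mul_self]
  exact pow_le_one₀ (norm_nonneg k) h

lemma IsSelfAdjoint.norm_le_one_of_mul_self_add_mul_self_eq_one (hk : IsSelfAdjoint k)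
    (hr : IsSelfAdjoint r) (h : k * k + r * r = 1) : ‖k‖ ≤ 1 := by
  have hkk : k * k ≤ 1 := h ▸ le_add_of_nonneg_right hr.mul_self_nonneg
  have := (CStarAlgebra.norm_le_one_iff_of_nonneg _ hk.mul_self_nonneg).mpr hkk
  rw [hk.norm_mul_self] at this
  exact (pow_le_one_iff_of_nonneg (norm_nonneg k) two_ne_zero).mp this

lemma norm_commutator_realPart_mul_le (hk : IsSelfAdjoint k) (hr : IsSelfAdjoint r)
    (hrk : Commute r k) (hkr : k * k + r * r = 1) :
    ‖k * ℜ (u * r) - ℜ (u * r) * k‖ ≤ ‖u * k - k * u‖ := by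
  rw [hk.mul_realPart_sub_realPart_mul, norm_smul, norm_I, one_mul]
  exact (imaginaryPart.norm_le _).trans <| norm_commutator_mul_le_of_commute hrk <|
    hr.norm_le_one_of_mul_self_add_mul_self_eq_one hk (by rwa [add_comm])

lemma norm_commutator_imaginaryPart_mul_le (hk : IsSelfAdjoint k) (hr : IsSelfAdjoint r)
    (hrk : Commute r k) (hkr : k * k + r * r = 1) :
    ‖k * ℑ (u * r) - ℑ (u * r) * k‖ ≤ ‖u * k - k * u‖ := by
  rw [hk.mul_imaginaryPart_sub_imaginaryPart_mul, norm_smul, norm_neg, norm_I, one_mul]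
  exact (realPart.norm_le _).trans <| norm_commutator_mul_le_of_commute hrk <|
    hr.norm_le_one_of_mul_self_add_mul_self_eq_one hk (by rwa [add_comm])

lemma norm_commutator_realPart_imaginaryPart_unitary_mul_le (hu : u ∈ unitary A)
    (hk : IsSelfAdjoint k) (hr : IsSelfAdjoint r) (hkr : k * k + r * r = 1) :
    ‖(ℜ (u * r) : A) * ℑ (u * r) - ℑ (u * r) * ℜ (u * r)‖ ≤ ‖u * k - k * u‖ := by
  have h := congrArg norm (star_mul_self_sub_self_mul_star (u * r))
  rw [star_mul_self_sub_self_mul_star_unitary_mul hu hr hkr, RCLike.norm_nsmul ℝ, norm_smul,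
    norm_I, one_mul, nsmul_eq_mul, Nat.cast_ofNat] at h
  have := norm_conj_mul_self_sub_mul_self_le hu
    (hk.norm_le_one_of_mul_self_add_mul_self_eq_one hr hkr)
  linarith

lemma norm_sq_add_realPart_sq_add_imaginaryPart_sq_sub_one_le (hu : u ∈ unitary A)
    (hk : IsSelfAdjoint k) (hr : IsSelfAdjoint r) (hkr : k * k + r * r = 1) :
    ‖k ^ 2 + (ℜ (u * r) : A) ^ 2 + (ℑ (u * r) : A) ^ 2 - 1‖ ≤ ‖u * k - k * u‖ := by
  set w := u * r
  have hdiff := star_mul_self_sub_self_mul_star_unitary_mul hu hr hkr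
  have hstar : star w * w = 1 - k * k := by
    rw [star_mul, hr.star_eq, mul_assoc, ← mul_assoc (star u), Unitary.star_mul_self_of_mem hu,
      one_mul, eq_sub_of_add_eq' hkr]
  have hmul : w * star w = star w * w - (u * (k * k) * star u - k * k) := by
    rw [← hdiff]; abel
  have h : (2 : ℕ) • (k ^ 2 + (ℜ w : A) ^ 2 + (ℑ w : A) ^ 2 - 1) =
      -(u * (k * k) * star u - k * k) := calc
    _ = 2 • (k * k) + 2 • ((ℜ w : A) * ℜ w + ℑ w * ℑ w) - 2 • 1 := by
      simp only [sq, smul_sub, smul_add]; abel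
    _ = _ := by
      rw [← star_mul_self_add_self_mul_star, hmul, hstar]; abel
  have hn := congrArg norm h
  rw [RCLike.norm_nsmul ℝ, norm_neg, nsmul_eq_mul, Nat.cast_ofNat] at hn
  have := norm_conj_mul_self_sub_mul_self_le hu
    (hk.norm_le_one_of_mul_self_add_mul_self_eq_one hr hkr)
  linarith

end StarOrderedCStarAlgebra

namespace Matrix.PosSemidef

variable {n : Type*} [Fintype n] [DecidableEq n] {A : Matrix n n ℂ}

lemma sqrt_eq_cfcSqrt (hA : A.PosSemidef) : hA.sqrt = CFC.sqrt A := by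
  rw [CFC.sqrt_eq_cfc, cfc_nnreal_eq_real _ A hA.nonneg, hA.1.cfc_eq]
  simp only [Matrix.PosSemidef.sqrt, IsHermitian.cfc]
  congr 3
  funext i
  simp only [Function.comp_apply, Real.coe_sqrt, Real.coe_toNNReal',
    max_eq_left (hA.eigenvalues_nonneg i)]
  rfl

lemma isHermitian_sqrt (hA : A.PosSemidef) : hA.sqrt.IsHermitian := by
  rw [hA.sqrt_eq_cfcSqrt]
  exact (CFC.sqrt_nonneg A).isSelfAdjoint

lemma sqrt_mul_self (hA : A.PosSemidef) : hA.sqrt * hA.sqrt = A := by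
  rw [hA.sqrt_eq_cfcSqrt]
  exact CFC.sqrt_mul_sqrt_self A hA.nonneg

lemma commute_sqrt {B : Matrix n n ℂ} (hA : A.PosSemidef) (hAB : Commute A B) :
    Commute hA.sqrt B := by
  rw [hA.sqrt_eq_cfcSqrt, CFC.sqrt_eq_cfc]
  exact hAB.cfc_nnreal _

end Matrix.PosSemidef

theorem cylindrical_to_spherical_general {n : ℕ} (δ : ℝ)
    (U K : Matrix (Fin n) (Fin n) ℂ)
    (hU₁ : Uᴴ * U = 1) (hU₂ : U * Uᴴ = 1)
    (hK : K.IsHermitian) (hKnorm : AC.opNorm K ≤ 1)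
    (hcomm : AC.opNorm (U * K - K * U) ≤ δ) :
    (1 - K ^ 2 : Matrix (Fin n) (Fin n) ℂ).PosSemidef ∧
    ∀ (hpsd : (1 - K ^ 2 : Matrix (Fin n) (Fin n) ℂ).PosSemidef),
      AC.IsSphereRep δ K
        ((1/2 : ℂ) • (U * hpsd.sqrt + hpsd.sqrt * Uᴴ))
        ((Complex.I / 2) • (-(U * hpsd.sqrt) + hpsd.sqrt * Uᴴ)) := by
  have hu : U ∈ unitary (Matrix (Fin n) (Fin n) ℂ) := ⟨hU₁, hU₂⟩
  have hk : IsSelfAdjoint K := hK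
  refine ⟨Matrix.nonneg_iff_posSemidef.mp ?_, fun hpsd => ?_⟩
  · rw [sub_nonneg, sq]
    exact hk.mul_self_le_one_of_norm_le_one hKnorm
  set R := hpsd.sqrt
  have hR : IsSelfAdjoint R := hpsd.isHermitian_sqrt
  have hRK : Commute R K :=
    hpsd.commute_sqrt ((Commute.one_left K).sub_left (.pow_left (.refl K) 2))
  have hKR : K * K + R * R = 1 := by rw [hpsd.sqrt_mul_self, sq, add_sub_cancel]
  have hstar : R * Uᴴ = star (U * R) := by rw [star_mul, hR.star_eq]; rfl
  rw [hstar, ← coe_realPart_eq_half_smul, ← coe_imaginaryPart_eq_I_half_smul]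
  exact ⟨hK, (ℜ _).2, (ℑ _).2,
    (norm_commutator_realPart_mul_le hk hR hRK hKR).trans hcomm,
    (norm_commutator_imaginaryPart_mul_le hk hR hRK hKR).trans hcomm,
    (norm_commutator_realPart_imaginaryPart_unitary_mul_le hu hk hR hKR).trans hcomm,
    (norm_sq_add_realPart_sq_add_imaginaryPart_sq_sub_one_le hu hk hR hKR).trans hcomm⟩

/-- Lemma (`lem:toSpherical`, cylindrical to spherical coordinates): if `U` is unitary,
`K` is a Hermitian contraction, and `‖[U,K]‖ ≤ δ`, then `I − K²` is positive
semidefinite and, with `R = (I − K²)^{1/2}` its positive semidefinite square root, the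
triple `(K, (1/2)(UR + RU*), (i/2)(−UR + RU*))` is a δ-representation of the sphere. -/
theorem cylindrical_to_spherical {n : ℕ} (δ : ℝ) (hδ0 : 0 ≤ δ)
    (U K : Matrix (Fin n) (Fin n) ℂ)
    (hU₁ : Uᴴ * U = 1) (hU₂ : U * Uᴴ = 1)
    (hK : K.IsHermitian) (hKnorm : AC.opNorm K ≤ 1)
    (hcomm : AC.opNorm (U * K - K * U) ≤ δ) :
    (1 - K ^ 2 : Matrix (Fin n) (Fin n) ℂ).PosSemidef ∧
    ∀ (hpsd : (1 - K ^ 2 : Matrix (Fin n) (Fin n) ℂ).PosSemidef),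
      AC.IsSphereRep δ K
        ((1/2 : ℂ) • (U * hpsd.sqrt + hpsd.sqrt * Uᴴ))
        ((Complex.I / 2) • (-(U * hpsd.sqrt) + hpsd.sqrt * Uᴴ)) :=
  cylindrical_to_spherical_general δ U K hU₁ hU₂ hK hKnorm hcomm
end
end

section
/- Let X, Y, Z be pairwise commuting Hermitian n×n complex matrices with X² + Y² + Z² = L²I for some real L > 0, and let P be an n×n orthogonal projection (P = P* = P²). Then: (1) ‖(PXP)(PYP) − (PYP)(PXP)‖ ≤ 2·‖[X,P]‖·‖[Y,P]‖, and similarly for the pairs (Y,Z) and (Z,X); and (2) ‖(PXP)² + (PYP)² + (PZP)² − L²P‖ ≤ ‖[X,P]‖² + ‖[Y,P]‖² + ‖[Z,P]‖². In particular, if ‖[X,P]‖, ‖[Y,P]‖, ‖[Z,P]‖ ≤ c, then on the range of P the compressions (PXP/L, PYP/L, PZP/L) satisfy the relations of a δ-representation of the sphere with δ = max(2c²/L², 3c²/L²) = 3c²/L². -/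
open Matrix

noncomputable section

section MyAux
variable {m : Type*} [Fintype m] [DecidableEq m]

lemma myOpN_nonneg (A : Matrix m m ℂ) : 0 ≤ AC.opNorm A := norm_nonneg _

lemma myOpN_mul_le (A B : Matrix m m ℂ) : AC.opNorm (A * B) ≤ AC.opNorm A * AC.opNorm B := by
  unfold AC.opNorm; rw [_root_.map_mul]; exact norm_mul_le _ _

lemma myOpN_add_le (A B : Matrix m m ℂ) : AC.opNorm (A + B) ≤ AC.opNorm A + AC.opNorm B := by
  unfold AC.opNorm; rw [map_add]; exact norm_add_le _ _

lemma myOpN_sub_le (A B : Matrix m m ℂ) : AC.opNorm (A - B) ≤ AC.opNorm A + AC.opNorm B := by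
  unfold AC.opNorm; rw [map_sub]; exact norm_sub_le _ _

set_option synthInstance.maxHeartbeats 1000000 in
lemma myOpN_smul (z : ℂ) (A : Matrix m m ℂ) : AC.opNorm (z • A) = ‖z‖ * AC.opNorm A := by
  unfold AC.opNorm
  rw [show Matrix.toEuclideanCLM (𝕜 := ℂ) (z • A) = z • Matrix.toEuclideanCLM (𝕜 := ℂ) A from
    _root_.map_smul _ z A]
  exact norm_smul z (Matrix.toEuclideanCLM (𝕜 := ℂ) A)

lemma myOpN_proj (P : Matrix m m ℂ) (h1 : Pᴴ = P) (h2 : P * P = P) : AC.opNorm P ≤ 1 := by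
  have key : AC.opNorm P * AC.opNorm P = AC.opNorm P := by
    unfold AC.opNorm
    rw [← CStarRing.norm_star_mul_self, ← map_star, ← _root_.map_mul]
    congr 2
    rw [Matrix.star_eq_conjTranspose, h1, h2]
  nlinarith [myOpN_nonneg P]

/-- sandwich bound -/
lemma mySandwich (P C D : Matrix m m ℂ) (h1 : Pᴴ = P) (h2 : P * P = P) :
    AC.opNorm (P * (C * D) * P) ≤ AC.opNorm C * AC.opNorm D := by
  have hp := myOpN_proj P h1 h2
  have a1 := myOpN_mul_le (P * (C * D)) P
  have a2 := myOpN_mul_le P (C * D)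
  have a3 := myOpN_mul_le C D
  nlinarith [myOpN_nonneg C, myOpN_nonneg D, myOpN_nonneg P, myOpN_nonneg (C * D),
    myOpN_nonneg (P * (C * D))]

end MyAux

set_option maxHeartbeats 1000000 in
/-- Lemma (`spherreplem`, compressions of commuting coordinates): let `X, Y, Z` be
pairwise commuting Hermitian matrices with `X² + Y² + Z² = L²·I` (`L > 0`) and let `P`
be an orthogonal projection.  Then the commutators of the compressions satisfy
`‖[PXP, PYP]‖ ≤ 2‖[X,P]‖‖[Y,P]‖` (and similarly for the pairs `(Y,Z)`, `(Z,X)`), and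
`‖(PXP)² + (PYP)² + (PZP)² − L²P‖ ≤ ‖[X,P]‖² + ‖[Y,P]‖² + ‖[Z,P]‖²`.  In particular, if
`‖[X,P]‖, ‖[Y,P]‖, ‖[Z,P]‖ ≤ c`, then the normalized compressions
`(PXP/L, PYP/L, PZP/L)` satisfy the relations of a δ-representation of the sphere
relative to `P`, with `δ = 3c²/L²`. -/
theorem compression_almost_sphere {n : ℕ}
    (X Y Z P : Matrix (Fin n) (Fin n) ℂ) (L : ℝ) (hL : 0 < L)
    (hX : X.IsHermitian) (hY : Y.IsHermitian) (hZ : Z.IsHermitian)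
    (hXY : X * Y = Y * X) (hYZ : Y * Z = Z * Y) (hZX : Z * X = X * Z)
    (hsum : X ^ 2 + Y ^ 2 + Z ^ 2 = ((L ^ 2 : ℝ) : ℂ) • 1)
    (hP₁ : Pᴴ = P) (hP₂ : P * P = P) :
    (AC.opNorm ((P * X * P) * (P * Y * P) - (P * Y * P) * (P * X * P)) ≤
        2 * AC.opNorm (X * P - P * X) * AC.opNorm (Y * P - P * Y)) ∧
    (AC.opNorm ((P * Y * P) * (P * Z * P) - (P * Z * P) * (P * Y * P)) ≤
        2 * AC.opNorm (Y * P - P * Y) * AC.opNorm (Z * P - P * Z)) ∧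
    (AC.opNorm ((P * Z * P) * (P * X * P) - (P * X * P) * (P * Z * P)) ≤
        2 * AC.opNorm (Z * P - P * Z) * AC.opNorm (X * P - P * X)) ∧
    (AC.opNorm ((P * X * P) ^ 2 + (P * Y * P) ^ 2 + (P * Z * P) ^ 2 -
        ((L ^ 2 : ℝ) : ℂ) • P) ≤
      AC.opNorm (X * P - P * X) ^ 2 + AC.opNorm (Y * P - P * Y) ^ 2 +
        AC.opNorm (Z * P - P * Z) ^ 2) ∧
    (∀ c : ℝ,
      AC.opNorm (X * P - P * X) ≤ c →
      AC.opNorm (Y * P - P * Y) ≤ c →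
      AC.opNorm (Z * P - P * Z) ≤ c →
      (AC.opNorm ((((L : ℂ)⁻¹ • (P * X * P)) * ((L : ℂ)⁻¹ • (P * Y * P))) -
          (((L : ℂ)⁻¹ • (P * Y * P)) * ((L : ℂ)⁻¹ • (P * X * P)))) ≤ 3 * c ^ 2 / L ^ 2) ∧
      (AC.opNorm ((((L : ℂ)⁻¹ • (P * Y * P)) * ((L : ℂ)⁻¹ • (P * Z * P))) -
          (((L : ℂ)⁻¹ • (P * Z * P)) * ((L : ℂ)⁻¹ • (P * Y * P)))) ≤ 3 * c ^ 2 / L ^ 2) ∧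
      (AC.opNorm ((((L : ℂ)⁻¹ • (P * Z * P)) * ((L : ℂ)⁻¹ • (P * X * P))) -
          (((L : ℂ)⁻¹ • (P * X * P)) * ((L : ℂ)⁻¹ • (P * Z * P)))) ≤ 3 * c ^ 2 / L ^ 2) ∧
      (AC.opNorm (((L : ℂ)⁻¹ • (P * X * P)) ^ 2 + ((L : ℂ)⁻¹ • (P * Y * P)) ^ 2 +
          ((L : ℂ)⁻¹ • (P * Z * P)) ^ 2 - P) ≤ 3 * c ^ 2 / L ^ 2)) := by
  have M := trivial
  have hPP : ∀ a : Matrix (Fin n) (Fin n) ℂ, P * (P * a) = P * a := fun a => by rw [← mul_assoc, hP₂]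
  have expand : ∀ A B : Matrix (Fin n) (Fin n) ℂ,
      P * ((A * P - P * A) * (B * P - P * B)) * P = P * A * P * B * P - P * A * B * P := by
    intro A B
    simp only [mul_sub, sub_mul, mul_assoc, hPP, hP₂]
    abel
  -- commutator identity
  have hid : ∀ A B : Matrix (Fin n) (Fin n) ℂ, A * B = B * A →
      (P * A * P) * (P * B * P) - (P * B * P) * (P * A * P) =
        P * ((A * P - P * A) * (B * P - P * B)) * P -
        P * ((B * P - P * B) * (A * P - P * A)) * P := by
    intro A B hAB
    rw [expand, expand]
    have e1 : (P * A * P) * (P * B * P) = P * A * P * B * P := by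
      simp only [mul_assoc, hPP]
    have e2 : (P * B * P) * (P * A * P) = P * B * P * A * P := by
      simp only [mul_assoc, hPP]
    have e3 : P * A * B * P = P * B * A * P := by
      rw [mul_assoc P A B, hAB, ← mul_assoc]
    rw [e1, e2, e3]
    abel
  -- commutator bound
  have cbound : ∀ A B : Matrix (Fin n) (Fin n) ℂ, A * B = B * A →
      AC.opNorm ((P * A * P) * (P * B * P) - (P * B * P) * (P * A * P)) ≤
        2 * AC.opNorm (A * P - P * A) * AC.opNorm (B * P - P * B) := by
    intro A B hAB
    rw [hid A B hAB]
    have t1 := mySandwich P (A * P - P * A) (B * P - P * B) hP₁ hP₂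
    have t2 := mySandwich P (B * P - P * B) (A * P - P * A) hP₁ hP₂
    have t3 := myOpN_sub_le (P * ((A * P - P * A) * (B * P - P * B)) * P)
      (P * ((B * P - P * B) * (A * P - P * A)) * P)
    nlinarith [myOpN_nonneg (A * P - P * A), myOpN_nonneg (B * P - P * B)]
  -- square identity
  have hsq : ∀ A : Matrix (Fin n) (Fin n) ℂ,
      (P * A * P) ^ 2 = P * (A * A) * P + P * ((A * P - P * A) * (A * P - P * A)) * P := by
    intro A
    rw [expand, pow_two]
    have e1 : (P * A * P) * (P * A * P) = P * A * P * A * P := by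
      simp only [mul_assoc, hPP]
    have e2 : P * (A * A) * P = P * A * A * P := by rw [← mul_assoc]
    rw [e1, e2]; abel
  -- big identity
  have hc : P * (X * X) * P + P * (Y * Y) * P + P * (Z * Z) * P = ((L ^ 2 : ℝ) : ℂ) • P := by
    have h0 : P * (X * X + Y * Y + Z * Z) * P = ((L ^ 2 : ℝ) : ℂ) • P := by
      have : X * X + Y * Y + Z * Z = ((L ^ 2 : ℝ) : ℂ) • 1 := by
        rw [← hsum]; simp [pow_two]
      rw [this, Matrix.mul_smul, Matrix.smul_mul, mul_one, hP₂]
    rw [← h0]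
    simp only [Matrix.mul_add, Matrix.add_mul]
  have hbig : (P * X * P) ^ 2 + (P * Y * P) ^ 2 + (P * Z * P) ^ 2 - ((L ^ 2 : ℝ) : ℂ) • P =
      P * ((X * P - P * X) * (X * P - P * X)) * P +
      P * ((Y * P - P * Y) * (Y * P - P * Y)) * P +
      P * ((Z * P - P * Z) * (Z * P - P * Z)) * P := by
    rw [hsq X, hsq Y, hsq Z, ← hc]; abel
  -- sum bound
  have sbound : AC.opNorm ((P * X * P) ^ 2 + (P * Y * P) ^ 2 + (P * Z * P) ^ 2 -
        ((L ^ 2 : ℝ) : ℂ) • P) ≤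
      AC.opNorm (X * P - P * X) ^ 2 + AC.opNorm (Y * P - P * Y) ^ 2 +
        AC.opNorm (Z * P - P * Z) ^ 2 := by
    rw [hbig]
    have t1 := mySandwich P (X * P - P * X) (X * P - P * X) hP₁ hP₂
    have t2 := mySandwich P (Y * P - P * Y) (Y * P - P * Y) hP₁ hP₂
    have t3 := mySandwich P (Z * P - P * Z) (Z * P - P * Z) hP₁ hP₂
    have a1 := myOpN_add_le
      (P * ((X * P - P * X) * (X * P - P * X)) * P + P * ((Y * P - P * Y) * (Y * P - P * Y)) * P)
      (P * ((Z * P - P * Z) * (Z * P - P * Z)) * P)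
    have a2 := myOpN_add_le (P * ((X * P - P * X) * (X * P - P * X)) * P)
      (P * ((Y * P - P * Y) * (Y * P - P * Y)) * P)
    nlinarith [sq_nonneg (AC.opNorm (X * P - P * X)), sq_nonneg (AC.opNorm (Y * P - P * Y))]
  refine ⟨cbound X Y hXY, cbound Y Z hYZ, cbound Z X hZX, sbound, ?_⟩
  -- scaled parts
  have hLne : (L : ℂ) ≠ 0 := by exact_mod_cast hL.ne'
  have hnormi : ‖((L : ℂ)⁻¹)‖ = L⁻¹ := by
    rw [norm_inv, Complex.norm_real, Real.norm_eq_abs, abs_of_pos hL]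
  have hnn : ‖(L : ℂ)⁻¹ * (L : ℂ)⁻¹‖ = (L ^ 2)⁻¹ := by
    rw [norm_mul, hnormi, pow_two, mul_inv]
  have hL2 : (0 : ℝ) < L ^ 2 := by positivity
  have scomm : ∀ A B : Matrix (Fin n) (Fin n) ℂ,
      ((L : ℂ)⁻¹ • A) * ((L : ℂ)⁻¹ • B) - ((L : ℂ)⁻¹ • B) * ((L : ℂ)⁻¹ • A) =
        ((L : ℂ)⁻¹ * (L : ℂ)⁻¹) • (A * B - B * A) := by
    intro A B
    simp [Matrix.smul_mul, Matrix.mul_smul, smul_smul, smul_sub]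
  intro c h1 h2 h3
  have hc0 : 0 ≤ c := le_trans (myOpN_nonneg _) h1
  have key2 : ∀ A B : Matrix (Fin n) (Fin n) ℂ, A * B = B * A →
      AC.opNorm (A * P - P * A) ≤ c → AC.opNorm (B * P - P * B) ≤ c →
      AC.opNorm (((L : ℂ)⁻¹ • (P * A * P)) * ((L : ℂ)⁻¹ • (P * B * P)) -
        ((L : ℂ)⁻¹ • (P * B * P)) * ((L : ℂ)⁻¹ • (P * A * P))) ≤ 3 * c ^ 2 / L ^ 2 := by
    intro A B hAB ha hb
    rw [scomm, myOpN_smul, hnn, div_eq_mul_inv]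
    have hcb := cbound A B hAB
    have hnna := myOpN_nonneg (A * P - P * A)
    have hnnb := myOpN_nonneg (B * P - P * B)
    have hN0 := myOpN_nonneg (P * A * P * (P * B * P) - P * B * P * (P * A * P))
    have hi0 : (0 : ℝ) ≤ (L ^ 2)⁻¹ := by positivity
    nlinarith [mul_le_mul ha hb hnnb hc0]
  refine ⟨key2 X Y hXY h1 h2, key2 Y Z hYZ h2 h3, key2 Z X hZX h3 h1, ?_⟩
  -- last part
  have hPs : (((L : ℂ)⁻¹) ^ 2) • (((L ^ 2 : ℝ) : ℂ) • P) = P := by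
    rw [smul_smul]
    have hone : ((L : ℂ)⁻¹) ^ 2 * ((L ^ 2 : ℝ) : ℂ) = 1 := by
      push_cast; field_simp
    rw [hone, one_smul]
  have hscale : ((L : ℂ)⁻¹ • (P * X * P)) ^ 2 + ((L : ℂ)⁻¹ • (P * Y * P)) ^ 2 +
        ((L : ℂ)⁻¹ • (P * Z * P)) ^ 2 - P =
      (((L : ℂ)⁻¹) ^ 2) •
        ((P * X * P) ^ 2 + (P * Y * P) ^ 2 + (P * Z * P) ^ 2 - ((L ^ 2 : ℝ) : ℂ) • P) := by
    rw [smul_sub, smul_add, smul_add, hPs, smul_pow, smul_pow, smul_pow]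
  rw [hscale, myOpN_smul]
  have hn2 : ‖((L : ℂ)⁻¹) ^ 2‖ = (L ^ 2)⁻¹ := by rw [pow_two, hnn]
  rw [hn2, div_eq_mul_inv]
  have hi0 : (0 : ℝ) ≤ (L ^ 2)⁻¹ := by positivity
  have hb1 : AC.opNorm (X * P - P * X) ^ 2 ≤ c ^ 2 := by
    nlinarith [myOpN_nonneg (X * P - P * X)]
  have hb2 : AC.opNorm (Y * P - P * Y) ^ 2 ≤ c ^ 2 := by
    nlinarith [myOpN_nonneg (Y * P - P * Y)]
  have hb3 : AC.opNorm (Z * P - P * Z) ^ 2 ≤ c ^ 2 := by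
    nlinarith [myOpN_nonneg (Z * P - P * Z)]
  nlinarith [sbound]
end
end
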